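/- Let F : ℝ² → [0,1] be a bivariate distribution function that is Lipschitz continuous, let (X,Y) and (X′,Y′) be independent random vectors each with distribution function F, and let h be the Kendall kernel. Then Kendall's tau τ = E[h((X,Y),(X′,Y′))] satisfies τ = 4 E[F(X,Y)] − 1. -/

import Mathlib

open MeasureTheory

/-- The Kendall kernel: `h((x₁,y₁),(x₂,y₂)) = sign((x₂−x₁)(y₂−y₁))`. -/
noncomputable def kendallKernel (z w : ℝ × ℝ) : ℝ :=
  if 0 < (w.1 - z.1) * (w.2 - z.2) then 1
  else if (w.1 - z.1) * (w.2 - z.2) < 0 then -1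
  else 0

open scoped ENNReal NNReal

lemma line_null_fst (ν : Measure (ℝ × ℝ)) [IsProbabilityMeasure ν]
    (F : ℝ → ℝ → ℝ)
    (hF : ∀ x y : ℝ, F x y = (ν {p : ℝ × ℝ | p.1 ≤ x ∧ p.2 ≤ y}).toReal)
    (C : ℝ) (hLip : ∀ x y x' y' : ℝ, |F x y - F x' y'| ≤ C * (|x - x'| + |y - y'|))
    (x : ℝ) : ν {p : ℝ × ℝ | p.1 = x} = 0 := by
  have hm : ∀ a b : ℝ, MeasurableSet {p : ℝ × ℝ | p.1 ≤ a ∧ p.2 ≤ b} := fun a b =>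
    (measurableSet_le measurable_fst measurable_const).inter
      (measurableSet_le measurable_snd measurable_const)
  have hcover : {p : ℝ × ℝ | p.1 = x} = ⋃ n : ℕ, {p : ℝ × ℝ | p.1 = x ∧ p.2 ≤ n} := by
    ext p
    simp only [Set.mem_setOf_eq, Set.mem_iUnion]
    constructor
    · intro h
      obtain ⟨n, hn⟩ := exists_nat_ge p.2
      exact ⟨n, h, hn⟩
    · rintro ⟨n, h, -⟩
      exact h
  rw [hcover]
  refine measure_iUnion_null fun n => ?_
  have key : ∀ ε : ℝ, 0 < ε →
      ν {p : ℝ × ℝ | p.1 = x ∧ p.2 ≤ (n:ℝ)} ≤ ENNReal.ofReal (C * ε) := by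
    intro ε hε
    have hsub : {p : ℝ × ℝ | p.1 = x ∧ p.2 ≤ (n:ℝ)} ⊆
        {p : ℝ × ℝ | p.1 ≤ x ∧ p.2 ≤ (n:ℝ)} \ {p : ℝ × ℝ | p.1 ≤ x - ε ∧ p.2 ≤ (n:ℝ)} := by
      rintro p ⟨h1, h2⟩
      refine ⟨⟨le_of_eq h1, h2⟩, fun h => ?_⟩
      have := h.1
      nlinarith
    refine (measure_mono hsub).trans ?_
    have hsub2 : {p : ℝ × ℝ | p.1 ≤ x - ε ∧ p.2 ≤ (n:ℝ)} ⊆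
        {p : ℝ × ℝ | p.1 ≤ x ∧ p.2 ≤ (n:ℝ)} := by
      intro p hp
      simp only [Set.mem_setOf_eq] at hp ⊢
      exact ⟨hp.1.trans (by linarith), hp.2⟩
    rw [measure_diff hsub2 (hm _ _).nullMeasurableSet (measure_ne_top ν _)]
    have e1 : ν {p : ℝ × ℝ | p.1 ≤ x ∧ p.2 ≤ (n:ℝ)} = ENNReal.ofReal (F x n) := by
      rw [hF, ENNReal.ofReal_toReal (measure_ne_top ν _)]
    have e2 : ν {p : ℝ × ℝ | p.1 ≤ x - ε ∧ p.2 ≤ (n:ℝ)} = ENNReal.ofReal (F (x - ε) n) := by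
      rw [hF, ENNReal.ofReal_toReal (measure_ne_top ν _)]
    have hFnn : 0 ≤ F (x - ε) n := by rw [hF]; exact ENNReal.toReal_nonneg
    rw [e1, e2, ← ENNReal.ofReal_sub _ hFnn]
    apply ENNReal.ofReal_le_ofReal
    have hL := hLip x n (x - ε) n
    have habs : |x - (x - ε)| = ε := by
      rw [abs_of_pos (by linarith : (0:ℝ) < x - (x - ε))]; ring
    calc F x n - F (x - ε) n ≤ |F x n - F (x - ε) n| := le_abs_self _
      _ ≤ C * (|x - (x - ε)| + |(n:ℝ) - n|) := hL
      _ = C * ε := by rw [habs, sub_self, abs_zero, add_zero]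
  refine le_antisymm ?_ zero_le
  refine ENNReal.le_of_forall_pos_le_add fun ε hε _ => ?_
  rcases le_or_gt C 0 with hC | hC
  · calc ν {p : ℝ × ℝ | p.1 = x ∧ p.2 ≤ (n:ℝ)} ≤ ENNReal.ofReal (C * 1) := key 1 one_pos
      _ = 0 := by rw [ENNReal.ofReal_eq_zero]; linarith
      _ ≤ 0 + ε := by simp
  · calc ν {p : ℝ × ℝ | p.1 = x ∧ p.2 ≤ (n:ℝ)}
        ≤ ENNReal.ofReal (C * ((ε:ℝ) / C)) := key _ (by positivity)
      _ = ENNReal.ofReal (ε:ℝ) := by rw [mul_div_cancel₀ _ (ne_of_gt hC)]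
      _ = (ε : ℝ≥0∞) := ENNReal.ofReal_coe_nnreal
      _ ≤ 0 + ε := by simp

lemma line_null_snd (ν : Measure (ℝ × ℝ)) [IsProbabilityMeasure ν]
    (F : ℝ → ℝ → ℝ)
    (hF : ∀ x y : ℝ, F x y = (ν {p : ℝ × ℝ | p.1 ≤ x ∧ p.2 ≤ y}).toReal)
    (C : ℝ) (hLip : ∀ x y x' y' : ℝ, |F x y - F x' y'| ≤ C * (|x - x'| + |y - y'|))
    (y : ℝ) : ν {p : ℝ × ℝ | p.2 = y} = 0 := by
  have hm : ∀ a b : ℝ, MeasurableSet {p : ℝ × ℝ | p.1 ≤ a ∧ p.2 ≤ b} := fun a b =>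
    (measurableSet_le measurable_fst measurable_const).inter
      (measurableSet_le measurable_snd measurable_const)
  have hcover : {p : ℝ × ℝ | p.2 = y} = ⋃ n : ℕ, {p : ℝ × ℝ | p.1 ≤ n ∧ p.2 = y} := by
    ext p
    simp only [Set.mem_setOf_eq, Set.mem_iUnion]
    constructor
    · intro h
      obtain ⟨n, hn⟩ := exists_nat_ge p.1
      exact ⟨n, hn, h⟩
    · rintro ⟨n, -, h⟩
      exact h
  rw [hcover]
  refine measure_iUnion_null fun n => ?_
  have key : ∀ ε : ℝ, 0 < ε →
      ν {p : ℝ × ℝ | p.1 ≤ (n:ℝ) ∧ p.2 = y} ≤ ENNReal.ofReal (C * ε) := by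
    intro ε hε
    have hsub : {p : ℝ × ℝ | p.1 ≤ (n:ℝ) ∧ p.2 = y} ⊆
        {p : ℝ × ℝ | p.1 ≤ (n:ℝ) ∧ p.2 ≤ y} \ {p : ℝ × ℝ | p.1 ≤ (n:ℝ) ∧ p.2 ≤ y - ε} := by
      rintro p ⟨h1, h2⟩
      refine ⟨⟨h1, le_of_eq h2⟩, fun h => ?_⟩
      have := h.2
      nlinarith
    refine (measure_mono hsub).trans ?_
    have hsub2 : {p : ℝ × ℝ | p.1 ≤ (n:ℝ) ∧ p.2 ≤ y - ε} ⊆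
        {p : ℝ × ℝ | p.1 ≤ (n:ℝ) ∧ p.2 ≤ y} := by
      intro p hp
      simp only [Set.mem_setOf_eq] at hp ⊢
      exact ⟨hp.1, hp.2.trans (by linarith)⟩
    rw [measure_diff hsub2 (hm _ _).nullMeasurableSet (measure_ne_top ν _)]
    have e1 : ν {p : ℝ × ℝ | p.1 ≤ (n:ℝ) ∧ p.2 ≤ y} = ENNReal.ofReal (F n y) := by
      rw [hF, ENNReal.ofReal_toReal (measure_ne_top ν _)]
    have e2 : ν {p : ℝ × ℝ | p.1 ≤ (n:ℝ) ∧ p.2 ≤ y - ε} = ENNReal.ofReal (F n (y - ε)) := by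
      rw [hF, ENNReal.ofReal_toReal (measure_ne_top ν _)]
    have hFnn : 0 ≤ F n (y - ε) := by rw [hF]; exact ENNReal.toReal_nonneg
    rw [e1, e2, ← ENNReal.ofReal_sub _ hFnn]
    apply ENNReal.ofReal_le_ofReal
    have hL := hLip n y n (y - ε)
    have habs : |y - (y - ε)| = ε := by
      rw [abs_of_pos (by linarith : (0:ℝ) < y - (y - ε))]; ring
    calc F n y - F n (y - ε) ≤ |F n y - F n (y - ε)| := le_abs_self _
      _ ≤ C * (|(n:ℝ) - n| + |y - (y - ε)|) := hL
      _ = C * ε := by rw [habs, sub_self, abs_zero, zero_add]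
  refine le_antisymm ?_ zero_le
  refine ENNReal.le_of_forall_pos_le_add fun ε hε _ => ?_
  rcases le_or_gt C 0 with hC | hC
  · calc ν {p : ℝ × ℝ | p.1 ≤ (n:ℝ) ∧ p.2 = y} ≤ ENNReal.ofReal (C * 1) := key 1 one_pos
      _ = 0 := by rw [ENNReal.ofReal_eq_zero]; linarith
      _ ≤ 0 + ε := by simp
  · calc ν {p : ℝ × ℝ | p.1 ≤ (n:ℝ) ∧ p.2 = y}
        ≤ ENNReal.ofReal (C * ((ε:ℝ) / C)) := key _ (by positivity)
      _ = ENNReal.ofReal (ε:ℝ) := by rw [mul_div_cancel₀ _ (ne_of_gt hC)]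
      _ = (ε : ℝ≥0∞) := ENNReal.ofReal_coe_nnreal
      _ ≤ 0 + ε := by simp

/-- If the bivariate distribution function `F` of the law `ν` is Lipschitz
continuous, then Kendall's tau `τ = E[h((X,Y),(X′,Y′))]` (with `(X,Y), (X′,Y′)` i.i.d. `ν`)
satisfies `τ = 4 E[F(X,Y)] − 1`. -/
theorem kendall_tau_eq_four_EF_sub_one
    (ν : Measure (ℝ × ℝ)) [IsProbabilityMeasure ν]
    (F : ℝ → ℝ → ℝ)
    (hF : ∀ x y : ℝ, F x y = (ν {p : ℝ × ℝ | p.1 ≤ x ∧ p.2 ≤ y}).toReal)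
    (C : ℝ) (hLip : ∀ x y x' y' : ℝ, |F x y - F x' y'| ≤ C * (|x - x'| + |y - y'|)) :
    ∫ z : (ℝ × ℝ) × (ℝ × ℝ), kendallKernel z.1 z.2 ∂(ν.prod ν)
      = 4 * (∫ p : ℝ × ℝ, F p.1 p.2 ∂ν) - 1 := by
  set μ := ν.prod ν with hμ
  set A : Set ((ℝ × ℝ) × (ℝ × ℝ)) := {z | 0 < (z.2.1 - z.1.1) * (z.2.2 - z.1.2)} with hA
  set B : Set ((ℝ × ℝ) × (ℝ × ℝ)) := {z | (z.2.1 - z.1.1) * (z.2.2 - z.1.2) < 0} with hB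
  set D : Set ((ℝ × ℝ) × (ℝ × ℝ)) := {z | z.2.1 ≤ z.1.1 ∧ z.2.2 ≤ z.1.2} with hD
  set D' : Set ((ℝ × ℝ) × (ℝ × ℝ)) := {z | z.2.1 < z.1.1 ∧ z.2.2 < z.1.2} with hD'
  set E' : Set ((ℝ × ℝ) × (ℝ × ℝ)) := {z | z.1.1 < z.2.1 ∧ z.1.2 < z.2.2} with hE'
  set T1 : Set ((ℝ × ℝ) × (ℝ × ℝ)) := {z | z.1.1 = z.2.1} with hT1def
  set T2 : Set ((ℝ × ℝ) × (ℝ × ℝ)) := {z | z.1.2 = z.2.2} with hT2def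
  have m11 : Measurable fun z : (ℝ × ℝ) × (ℝ × ℝ) => z.1.1 := measurable_fst.fst
  have m12 : Measurable fun z : (ℝ × ℝ) × (ℝ × ℝ) => z.1.2 := measurable_fst.snd
  have m21 : Measurable fun z : (ℝ × ℝ) × (ℝ × ℝ) => z.2.1 := measurable_snd.fst
  have m22 : Measurable fun z : (ℝ × ℝ) × (ℝ × ℝ) => z.2.2 := measurable_snd.snd
  have hg : Measurable fun z : (ℝ × ℝ) × (ℝ × ℝ) => (z.2.1 - z.1.1) * (z.2.2 - z.1.2) :=
    ((m21.sub m11).mul (m22.sub m12))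
  have hmA : MeasurableSet A := measurableSet_lt measurable_const hg
  have hmB : MeasurableSet B := measurableSet_lt hg measurable_const
  have hmD : MeasurableSet D :=
    (measurableSet_le m21 m11).inter (measurableSet_le m22 m12)
  have hmD' : MeasurableSet D' :=
    (measurableSet_lt m21 m11).inter (measurableSet_lt m22 m12)
  have hmE' : MeasurableSet E' :=
    (measurableSet_lt m11 m21).inter (measurableSet_lt m12 m22)
  have hmT1 : MeasurableSet T1 := measurableSet_eq_fun m11 m21
  have hmT2 : MeasurableSet T2 := measurableSet_eq_fun m12 m22
  -- ties are null
  have hT1 : μ T1 = 0 := by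
    rw [hμ, Measure.prod_apply hmT1]
    have : ∀ p : ℝ × ℝ, ν (Prod.mk p ⁻¹' T1) = 0 := by
      intro p
      have : Prod.mk p ⁻¹' T1 = {q : ℝ × ℝ | q.1 = p.1} := by
        ext q; simp [hT1def, eq_comm]
      rw [this]
      exact line_null_fst ν F hF C hLip p.1
    simp [this]
  have hT2 : μ T2 = 0 := by
    rw [hμ, Measure.prod_apply hmT2]
    have : ∀ p : ℝ × ℝ, ν (Prod.mk p ⁻¹' T2) = 0 := by
      intro p
      have : Prod.mk p ⁻¹' T2 = {q : ℝ × ℝ | q.2 = p.2} := by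
        ext q; simp [hT2def, eq_comm]
      rw [this]
      exact line_null_snd ν F hF C hLip p.2
    simp [this]
  have hT : μ (T1 ∪ T2) = 0 := measure_union_null hT1 hT2
  -- swap invariance
  have hswap : ∀ s : Set ((ℝ × ℝ) × (ℝ × ℝ)), MeasurableSet s → μ (Prod.swap ⁻¹' s) = μ s := by
    intro s hs
    conv_rhs => rw [hμ, ← Measure.prod_swap, Measure.map_apply measurable_swap hs]
  have hE'D' : μ E' = μ D' := by
    have : E' = Prod.swap ⁻¹' D' := by
      ext z; simp [hE', hD', Prod.swap]
    rw [this, hswap D' hmD']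
  -- A splits
  have hAsplit : μ A = μ E' + μ D' := by
    have hAeq : A = E' ∪ D' := by
      ext z
      simp only [hA, hE', hD', Set.mem_setOf_eq, Set.mem_union, mul_pos_iff, sub_pos,
        sub_neg]
    have hdisj : Disjoint E' D' := by
      rw [Set.disjoint_left]
      intro z h1 h2
      exact absurd h1.1 (not_lt.mpr h2.1.le)
    rw [hAeq, measure_union hdisj hmD']
  -- D' vs D
  have hD'D : μ D' = μ D := by
    refine le_antisymm (measure_mono fun z hz => ⟨hz.1.le, hz.2.le⟩) ?_
    have hsub : D ⊆ D' ∪ (T1 ∪ T2) := by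
      intro z hz
      rcases lt_or_eq_of_le hz.1 with h1 | h1
      · rcases lt_or_eq_of_le hz.2 with h2 | h2
        · exact Or.inl ⟨h1, h2⟩
        · exact Or.inr (Or.inr h2.symm)
      · exact Or.inr (Or.inl h1.symm)
    calc μ D ≤ μ (D' ∪ (T1 ∪ T2)) := measure_mono hsub
      _ ≤ μ D' + μ (T1 ∪ T2) := measure_union_le _ _
      _ = μ D' := by rw [hT, add_zero]
  have hA2D : μ A = 2 * μ D := by
    rw [hAsplit, hE'D', hD'D, two_mul]
  -- A, B and complement
  have hAB1 : μ A + μ B = 1 := by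
    have hdisj : Disjoint A B := by
      rw [Set.disjoint_left]
      intro z h1 h2
      simp only [hA, hB, Set.mem_setOf_eq] at h1 h2
      linarith
    have hcompl : (A ∪ B)ᶜ ⊆ T1 ∪ T2 := by
      intro z hz
      simp only [Set.mem_compl_iff, Set.mem_union, hA, hB, Set.mem_setOf_eq, not_or,
        not_lt] at hz
      have h0 : (z.2.1 - z.1.1) * (z.2.2 - z.1.2) = 0 := le_antisymm hz.1 hz.2
      rcases mul_eq_zero.mp h0 with h | h
      · exact Or.inl (by simpa [hT1def, eq_comm, sub_eq_zero] using h)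
      · exact Or.inr (by simpa [hT2def, eq_comm, sub_eq_zero] using h)
    have h1 : μ (A ∪ B) = 1 := by
      have hc : μ (A ∪ B)ᶜ = 0 := measure_mono_null hcompl hT
      have := measure_add_measure_compl (μ := μ) (hmA.union hmB)
      rw [hc, add_zero, measure_univ] at this
      exact this
    rw [← measure_union hdisj hmB, h1]
  -- E[F] identity
  have hID : ∫ p : ℝ × ℝ, F p.1 p.2 ∂ν = (μ D).toReal := by
    have h1 : ∀ p : ℝ × ℝ, F p.1 p.2 = (ν (Prod.mk p ⁻¹' D)).toReal := by
      intro p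
      have hpre : Prod.mk p ⁻¹' D = {q : ℝ × ℝ | q.1 ≤ p.1 ∧ q.2 ≤ p.2} := rfl
      rw [hF, hpre]
    simp_rw [h1]
    rw [integral_toReal (measurable_measure_prodMk_left hmD).aemeasurable
      (ae_of_all _ fun p => measure_lt_top ν _), hμ, Measure.prod_apply hmD]
  -- kernel as indicators
  have hker : (fun z : (ℝ × ℝ) × (ℝ × ℝ) => kendallKernel z.1 z.2) =
      fun z => A.indicator (fun _ => (1:ℝ)) z + B.indicator (fun _ => (-1:ℝ)) z := by
    funext z
    simp only [kendallKernel, Set.indicator_apply, hA, hB, Set.mem_setOf_eq]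
    split_ifs with h1 h2 <;> norm_num <;> linarith
  rw [hker, integral_add ((integrable_const (1:ℝ)).indicator hmA)
    ((integrable_const (-1:ℝ)).indicator hmB),
    integral_indicator_const _ hmA, integral_indicator_const _ hmB, hID]
  -- final arithmetic
  have hAfin : μ A ≠ ⊤ := measure_ne_top μ A
  have hBfin : μ B ≠ ⊤ := measure_ne_top μ B
  have ha : (μ A).toReal = 2 * (μ D).toReal := by
    rw [hA2D, ENNReal.toReal_mul]
    norm_num
  have hab : (μ A).toReal + (μ B).toReal = 1 := by
    rw [← ENNReal.toReal_add hAfin hBfin, hAB1, ENNReal.toReal_one]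
  simp only [smul_eq_mul, mul_one, mul_neg, mul_one]
  rw [measureReal_def, measureReal_def]
  linarith
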